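/- Let f : ℝ → b(ℝ) be the canonical dense one-parameter subgroup of the Bohr compactification of ℝ (the dual of id : ℝ_d → ℝ). For each n ∈ ℕ let R_n = {(r, n·f(r)) : r ∈ ℝ} ⊆ ℝ × b(ℝ). Identifying the dual of ℝ × b(ℝ) with ℝ × ℝ_d, the annihilator of R_n is R_n^⊥ = {(r, r/n) : r ∈ ℝ} ⊆ ℝ × ℝ_d, and the sequence (R_n^⊥)_{n∈ℕ} converges to the trivial subgroup {(0,0)} in the Chabauty topology on closed subgroups of ℝ × ℝ_d. -/

import Mathlib

open Pointwise Filter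

/-- `ℝ_d`: the real line with the discrete topology. -/
def Rd : Type := ℝ

noncomputable instance : AddCommGroup Rd := inferInstanceAs (AddCommGroup ℝ)
instance : TopologicalSpace Rd := ⊥
instance : DiscreteTopology Rd := ⟨rfl⟩
instance : IsTopologicalAddGroup Rd where
  continuous_add := continuous_of_discreteTopology
  continuous_neg := continuous_of_discreteTopology

/-- The identity map `ℝ_d → ℝ`. -/
def Rd.toReal : Rd → ℝ := fun t => t

/-- The identity map `ℝ → ℝ_d`. -/
def Rd.ofReal : ℝ → Rd := fun t => t

/-- The Bohr compactification `b(ℝ)` of `ℝ`, realized as the Pontryagin dual of `ℝ_d`. -/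
abbrev BohrR : Type _ := ContinuousAddMonoidHom Rd (AddCircle (1 : ℝ))

/-- The canonical one-parameter subgroup `f : ℝ → b(ℝ)` (the dual of `id : ℝ_d → ℝ`):
`f r` is the character `s ↦ ↑(r·s)` of `ℝ_d`. -/
noncomputable def bohrChar (r : ℝ) : BohrR :=
  { toAddMonoidHom := AddMonoidHom.mk' (fun s : Rd => ((r * Rd.toReal s : ℝ) : AddCircle (1 : ℝ)))
      (fun a b => by
        show ((r * (Rd.toReal a + Rd.toReal b) : ℝ) : AddCircle (1 : ℝ)) = _
        rw [mul_add]
        rfl)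
    continuous_toFun := continuous_of_discreteTopology }

/-- `R_n = {(r, n·f r) : r ∈ ℝ}`, the graph of `n·f` in `ℝ × b(ℝ)`. -/
noncomputable def Rn (n : ℕ) : Set (ℝ × BohrR) :=
  {z | ∃ r : ℝ, z = (r, n • bohrChar r)}

/-- The annihilator `R_n^⊥` inside the dual `ℝ × ℝ_d` of `ℝ × b(ℝ)`, the dual pairing
being `(a, t)(x, χ) = ↑(a·x) - χ(t)`. -/
noncomputable def RnPerp (n : ℕ) : Set (ℝ × Rd) :=
  {q | ∀ z ∈ Rn n, ((q.1 * z.1 : ℝ) : AddCircle (1 : ℝ)) - z.2 q.2 = 0}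

/-- Chabauty convergence of a sequence of subsets (closed subgroups) of a locally
compact additive group, via the standard neighborhood basis. -/

private lemma bohrChar_apply (r : ℝ) (t : Rd) :
    bohrChar r t = ((r * Rd.toReal t : ℝ) : AddCircle (1 : ℝ)) := rfl

private lemma nsmul_apply' (n : ℕ) (f : BohrR) (t : Rd) : (n • f) t = n • (f t) := by
  induction n with
  | zero => rw [zero_nsmul, zero_nsmul]; rfl
  | succ k ih => rw [succ_nsmul, succ_nsmul, ← ih]; rfl

private lemma coe_nsmul' (n : ℕ) (y : ℝ) :
    n • (y : AddCircle (1 : ℝ)) = ((n * y : ℝ) : AddCircle (1 : ℝ)) := by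
  rw [← nsmul_eq_mul]
  exact (map_nsmul (QuotientAddGroup.mk' (AddSubgroup.zmultiples (1 : ℝ))) n y).symm

private lemma zero_of_forall (c : ℝ)
    (h : ∀ r : ℝ, ((c * r : ℝ) : AddCircle (1 : ℝ)) = 0) : c = 0 := by
  by_contra hc
  have h2 := h (2 * c)⁻¹
  have hce : c * (2 * c)⁻¹ = 2⁻¹ := by field_simp
  rw [hce, AddCircle.coe_eq_zero_iff] at h2
  obtain ⟨m, hm⟩ := h2
  have : (m : ℝ) = 2⁻¹ := by simpa using hm
  have h2m : (2 * m : ℤ) = 1 := by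
    have : (2 * m : ℝ) = 1 := by push_cast [this]; norm_num
    exact_mod_cast this
  omega

private lemma exists_pos_le_abs (S : Set ℝ) (hS : S.Finite) :
    ∃ δ : ℝ, 0 < δ ∧ ∀ t ∈ S, t ≠ 0 → δ ≤ |t| := by
  classical
  have hF : (S \ {0}).Finite := hS.diff
  rcases (S \ {0}).eq_empty_or_nonempty with he | hne
  · exact ⟨1, one_pos, fun t ht ht0 => absurd (Set.mem_diff_of_mem ht ht0) (by rw [he]; simp)⟩
  · set T : Finset ℝ := hF.toFinset with hT
    have hTne : T.Nonempty := by rwa [hT, Set.Finite.toFinset_nonempty]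
    refine ⟨T.inf' hTne (fun t => |t|), ?_, ?_⟩
    · rw [Finset.lt_inf'_iff]
      intro t ht
      rw [hT, Set.Finite.mem_toFinset] at ht
      exact abs_pos.mpr ht.2
    · intro t ht ht0
      exact Finset.inf'_le _ (by rw [hT, Set.Finite.mem_toFinset]; exact ⟨ht, ht0⟩)

def ChabautyTendstoSet {G ι : Type*} [AddGroup G] [TopologicalSpace G]
    (H : ι → Set G) (l : Filter ι) (L : Set G) : Prop :=
  ∀ K : Set G, IsCompact K → ∀ W ∈ nhds (0 : G), ∀ᶠ i in l,
    H i ∩ K ⊆ W + L ∧ L ∩ K ⊆ W + H i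

/-- `R_n^⊥ = {(r, r/n) : r ∈ ℝ} ⊆ ℝ × ℝ_d`, and the sequence `(R_n^⊥)` converges to
the trivial subgroup `{(0,0)}` in the Chabauty topology on `ℝ × ℝ_d`. -/
theorem RnPerp_eq_graph_and_tendsto_trivial :
    (∀ n : ℕ, 0 < n →
      RnPerp n = {q : ℝ × Rd | ∃ r : ℝ, q = (r, Rd.ofReal (r / n))}) ∧
    ChabautyTendstoSet RnPerp atTop ({0} : Set (ℝ × Rd)) := by
  have h1 : ∀ n : ℕ, 0 < n →
      RnPerp n = {q : ℝ × Rd | ∃ r : ℝ, q = (r, Rd.ofReal (r / n))} := by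
    intro n hn
    have hn' : (n : ℝ) ≠ 0 := Nat.cast_ne_zero.mpr hn.ne'
    ext q
    constructor
    · intro h
      have key : ∀ r : ℝ, (((q.1 - n * Rd.toReal q.2) * r : ℝ) : AddCircle (1 : ℝ)) = 0 := by
        intro r
        have hz := h (r, n • bohrChar r) ⟨r, rfl⟩
        simp only at hz
        rw [nsmul_apply', bohrChar_apply, coe_nsmul'] at hz
        rw [show ((q.1 - n * Rd.toReal q.2) * r : ℝ)
            = q.1 * r - n * (r * Rd.toReal q.2) by ring]
        exact hz
      have ha : q.1 = n * Rd.toReal q.2 := by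
        have := zero_of_forall _ key
        linarith
      refine ⟨q.1, ?_⟩
      have ht : Rd.ofReal (q.1 / n) = q.2 := by
        show (q.1 / n : ℝ) = Rd.toReal q.2
        rw [ha]; field_simp
      rw [ht]
    · rintro ⟨r, rfl⟩
      rintro z ⟨s, rfl⟩
      simp only
      rw [nsmul_apply', bohrChar_apply,
        show Rd.toReal (Rd.ofReal (r / n)) = r / n from rfl, coe_nsmul',
        show ((n : ℝ) * (s * (r / n)) : ℝ) = r * s by field_simp, sub_self]
  refine ⟨h1, ?_⟩
  intro K hK W hW
  have h0W : (0 : ℝ × Rd) ∈ W := mem_of_mem_nhds hW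
  obtain ⟨M, hM⟩ := ((hK.image continuous_fst).isBounded).subset_closedBall 0
  have hfin : (Rd.toReal '' (Prod.snd '' K)).Finite :=
    (((hK.image continuous_snd).finite_of_discrete)).image _
  obtain ⟨δ, hδ, hδle⟩ := exists_pos_le_abs _ hfin
  obtain ⟨N, hN⟩ := exists_nat_gt (M / δ)
  filter_upwards [eventually_ge_atTop (N + 1)] with n hn
  have hn0 : 0 < n := lt_of_lt_of_le (Nat.succ_pos N) hn
  have h0perp : (0 : ℝ × Rd) ∈ RnPerp n := by
    rintro z ⟨s, rfl⟩
    simp only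
    have : ((n • bohrChar s)) ((0 : ℝ × Rd).2) = 0 := map_zero _
    rw [this, show ((0 : ℝ × Rd).1 * s : ℝ) = 0 by simp]
    simp
  constructor
  · rintro q ⟨hq1, hq2⟩
    rw [h1 n hn0] at hq1
    obtain ⟨r, rfl⟩ := hq1
    have hr0 : r = 0 := by
      by_contra hr
      have hmem : Rd.toReal (Rd.ofReal (r / n)) ∈ Rd.toReal '' (Prod.snd '' K) :=
        ⟨_, ⟨_, hq2, rfl⟩, rfl⟩
      have hne : Rd.toReal (Rd.ofReal (r / n)) ≠ 0 := by
        show (r / n : ℝ) ≠ 0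
        exact div_ne_zero hr (Nat.cast_ne_zero.mpr hn0.ne')
      have hdle : δ ≤ |r / (n : ℝ)| := hδle _ hmem hne
      have hrM : |r| ≤ M := by
        have := hM ⟨_, hq2, rfl⟩
        simpa [Real.dist_eq] using this
      have habs : |r / (n : ℝ)| = |r| / n := by
        rw [abs_div, abs_of_nonneg (by positivity : (0:ℝ) ≤ (n:ℝ))]
      have hnN : (N : ℝ) < n := by exact_mod_cast lt_of_lt_of_le (Nat.lt_succ_self N) hn
      have hnpos : (0 : ℝ) < n := by positivity
      have : (n : ℝ) * δ ≤ |r| := by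
        rw [habs] at hdle
        calc (n : ℝ) * δ ≤ (n : ℝ) * (|r| / n) := by
              exact mul_le_mul_of_nonneg_left hdle (le_of_lt hnpos)
          _ = |r| := by field_simp
      have hMδ : M < (n : ℝ) * δ := by
        have : M / δ < (n : ℝ) := lt_trans hN hnN
        calc M = (M / δ) * δ := by field_simp
          _ < (n : ℝ) * δ := by exact mul_lt_mul_of_pos_right this hδ
      linarith
    subst hr0
    have : ((0 : ℝ), Rd.ofReal (0 / (n : ℝ))) = (0 : ℝ × Rd) := by
      refine Prod.ext rfl ?_
      show (0 / (n : ℝ)) = (0 : ℝ)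
      simp
    rw [this]
    simpa using Set.add_mem_add h0W (Set.mem_singleton (0 : ℝ × Rd))
  · rintro q ⟨hq1, -⟩
    rw [Set.mem_singleton_iff] at hq1
    subst hq1
    simpa using Set.add_mem_add h0W h0perp
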